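/- For each natural number d, let Ξ_d denote the restriction of the multiplication map Ξ to K[X_1,…,X_n]_{≤d}, so that the image of Ξ_d is the K-span in k(V) of the polynomials of degree at most d. If Ξ_d is not surjective onto k(V), then dim_K(im Ξ_{d+1}) ≥ dim_K(im Ξ_d) + 1; that is, the image strictly grows in the next degree. -/

import Mathlib

open MvPolynomial

set_option synthInstance.maxHeartbeats 1000000
set_option maxHeartbeats 1000000

section

variable (k : Type*) [Field k] (n : ℕ) (G : Type*) [Group G] [Fintype G]
  [MulSemiringAction G (MvPolynomial (Fin n) k)]
  [MulSemiringAction G (FractionRing (MvPolynomial (Fin n) k))]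

local notation "𝔸" => MvPolynomial (Fin n) k
local notation "𝔽" => FractionRing (MvPolynomial (Fin n) k)
local notation "𝕂" => FixedPoints.subfield G (FractionRing (MvPolynomial (Fin n) k))
local notation "ιF" =>
  algebraMap (MvPolynomial (Fin n) k) (FractionRing (MvPolynomial (Fin n) k))

/-- **Lemma (strict growth of the images of `Ξ_d`).** For each `d`, the image of the
restriction `Ξ_d` of the multiplication map `Ξ : K[X_1,…,X_n] → k(V)` to polynomials of
degree `≤ d` is the `K`-span of the (images in `k(V)` of the) polynomials of degree `≤ d`.
If `Ξ_d` is not surjective onto `k(V)`, then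
`dim_K (im Ξ_{d+1}) ≥ dim_K (im Ξ_d) + 1`: the image strictly grows in the next degree. -/
theorem image_of_Xi_strictly_grows
    [SMulCommClass G k (MvPolynomial (Fin n) k)]
    (hlin : ∀ (g : G) (i : Fin n), ((g • (X i : 𝔸)).IsHomogeneous 1))
    (hfaithful : ∀ g : G, (∀ p : 𝔸, g • p = p) → g = 1)
    (hcomp : ∀ (g : G) (p : 𝔸), g • (ιF p) = ιF (g • p))
    (d : ℕ)
    (hnot : Submodule.span 𝕂 (ιF '' {p : 𝔸 | p.totalDegree ≤ d}) ≠ ⊤) :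
    Module.finrank 𝕂 (Submodule.span 𝕂 (ιF '' {p : 𝔸 | p.totalDegree ≤ d})) + 1
      ≤ Module.finrank 𝕂
        (Submodule.span 𝕂 (ιF '' {p : 𝔸 | p.totalDegree ≤ d + 1})) := by
  classical
  set S : ℕ → Submodule 𝕂 𝔽 :=
    fun e => Submodule.span 𝕂 (ιF '' {p : 𝔸 | p.totalDegree ≤ e}) with hS
  -- monotonicity
  have hmono : ∀ e, S e ≤ S (e + 1) := by
    intro e
    apply Submodule.span_mono
    apply Set.image_mono
    intro p hp
    exact le_trans hp (Nat.le_succ e)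
  -- multiplication by X i maps S e into S (e+1)
  have hmul : ∀ (i : Fin n) (e : ℕ) (x : 𝔽), x ∈ S e → ιF (X i) * x ∈ S (e + 1) := by
    intro i e x hx
    have hmap : Submodule.map (LinearMap.mulLeft 𝕂 (ιF (X i))) (S e) ≤ S (e + 1) := by
      rw [hS, Submodule.map_span]
      apply Submodule.span_le.2
      rintro y ⟨_, ⟨p, hp, rfl⟩, rfl⟩
      apply Submodule.subset_span
      refine ⟨X i * p, ?_, ?_⟩
      · calc (X i * p).totalDegree ≤ (X (R := k) i).totalDegree + p.totalDegree :=
              totalDegree_mul _ _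
          _ ≤ 1 + e := add_le_add (totalDegree_X i).le hp
          _ = e + 1 := Nat.add_comm 1 e
      · simp [LinearMap.mulLeft]
    exact hmap ⟨x, hx, rfl⟩
  -- suffices: strict inclusion
  have hFD : FiniteDimensional 𝕂 𝔽 := inferInstance
  suffices hlt : S d < S (d + 1) by
    exact Submodule.finrank_lt_finrank_of_lt hlt
  rcases lt_or_eq_of_le (hmono d) with h | heq
  · exact h
  exfalso
  apply hnot
  -- all polynomials land in S d
  have key : ∀ (e : ℕ) (p : 𝔸), p.totalDegree ≤ d + e → ιF p ∈ S d := by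
    intro e
    induction e with
    | zero => intro p hp; exact Submodule.subset_span ⟨p, hp, rfl⟩
    | succ e ih =>
      intro p hp
      rw [p.as_sum, map_sum]
      apply Submodule.sum_mem
      intro m hm
      by_cases hms : (m.sum fun _ e => e) ≤ d + e
      · exact ih _ (le_trans (totalDegree_monomial_le m _) hms)
      · have hms' : (m.sum fun _ e => e) ≤ d + e + 1 := le_trans (le_totalDegree hm) hp
        have hmpos : 0 < m.sum fun _ e => e := by omega
        have : ∃ i, m i ≠ 0 := by
          by_contra hc
          push_neg at hc
          have : m = 0 := Finsupp.ext fun i => hc i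
          simp [this] at hmpos
        obtain ⟨i, hi⟩ := this
        set m' := m - Finsupp.single i 1 with hm'
        have hle : Finsupp.single i 1 ≤ m := by
          rw [Finsupp.single_le_iff]; omega
        have hrec : m' + Finsupp.single i 1 = m := tsub_add_cancel_of_le hle
        have hsum : (m'.sum fun _ e => e) + 1 = m.sum fun _ e => e := by
          rw [← hrec, Finsupp.sum_add_index' (fun _ => rfl) (fun _ _ _ => rfl)]
          simp
        have hmon : (monomial m (coeff m p) : 𝔸) = X i * monomial m' (coeff m p) := by
          rw [X, monomial_mul, one_mul, add_comm, hrec]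
        rw [hmon, map_mul]
        have h1 : ιF (monomial m' (coeff m p)) ∈ S d := by
          apply ih
          refine le_trans (totalDegree_monomial_le m' _) ?_
          show (m'.sum fun _ e => e) ≤ d + e
          omega
        have := hmul i d _ h1
        rwa [← heq] at this
  -- span of all poly images is everything
  rw [eq_top_iff]
  intro f _
  obtain ⟨p, q, hq, hf⟩ := IsFractionRing.div_surjective (A := 𝔸) f
  have hq0 : q ≠ 0 := nonZeroDivisors.ne_zero hq
  -- smul by G on 𝔸 is injective
  have hsmul_ne : ∀ (g : G) (r : 𝔸), r ≠ 0 → g • r ≠ 0 := by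
    intro g r hr hc
    apply hr
    have := congrArg (fun x => g⁻¹ • x) hc
    simpa using this
  set r : 𝔸 := ∏ g ∈ Finset.univ.erase (1 : G), g • q with hr
  set N : 𝔸 := ∏ g : G, g • q with hN
  have hNr : N = q * r := by
    rw [hN, hr, ← Finset.mul_prod_erase Finset.univ _ (Finset.mem_univ (1 : G)), one_smul]
  have hN0 : N ≠ 0 := by
    rw [hN]
    exact Finset.prod_ne_zero_iff.2 fun g _ => hsmul_ne g q hq0
  have hιN0 : ιF N ≠ 0 := by
    rw [map_ne_zero_iff _ (IsFractionRing.injective 𝔸 𝔽)]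
    exact hN0
  -- N is G-fixed in 𝔽
  have hNfix : ∀ g : G, g • (ιF N) = ιF N := by
    intro g
    rw [hcomp]
    congr 1
    rw [hN, Finset.smul_prod']
    simp_rw [smul_smul]
    exact Fintype.prod_equiv (Equiv.mulLeft g) _ _ fun h => rfl
  have hNinvfix : ∀ g : G, g • (ιF N)⁻¹ = (ιF N)⁻¹ := by
    intro g
    rw [smul_inv'', hNfix]
  set c : 𝕂 := ⟨(ιF N)⁻¹, fun g => hNinvfix g⟩ with hc
  have hmem : ιF (p * r) ∈ S d := key ((p * r).totalDegree) _ (by omega)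
  have hfc : f = c • ιF (p * r) := by
    have : (c : 𝔽) • ιF (p * r) = (ιF N)⁻¹ * ιF (p * r) := rfl
    rw [← hf]
    show _ = c • _
    rw [Subfield.smul_def, hc]
    simp only [map_mul]
    rw [hNr] at hιN0 ⊢
    rw [map_mul] at hιN0 ⊢
    have hq0' : ιF q ≠ 0 := fun h => hq0 ((map_eq_zero_iff _ (IsFractionRing.injective 𝔸 𝔽)).1 h)
    have hr0' : ιF r ≠ 0 := by
      intro h
      exact hιN0 (by rw [h, mul_zero])
    field_simp
    rw [smul_eq_mul, one_div, mul_inv, show ιF q * ((ιF q)⁻¹ * (ιF r)⁻¹ * (ιF p * ιF r)) = ιF p * (ιF q * (ιF q)⁻¹) * (ιF r * (ιF r)⁻¹) by ring, mul_inv_cancel₀ hq0', mul_inv_cancel₀ hr0', mul_one, mul_one]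
  rw [hfc]
  exact Submodule.smul_mem _ _ hmem

end
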